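/- Let α be the sequence with α_0=2 and α_m=3 for m≥1, and let β be the constant sequence β_m=1 for all m≥0. Then for every n≥1, Mot_n(α,β) = #SCH_even(n). -/

import Mathlib

/-- A step of a Motzkin path: up `(1,1)`, down `(1,-1)`, or horizontal `(1,0)`. -/
inductive MStep : Type
  | up : MStep
  | down : MStep
  | flat : MStep
  deriving DecidableEq

instance instFintypeMStep : Fintype MStep :=
  ⟨{MStep.up, MStep.down, MStep.flat}, fun x => by cases x <;> simp⟩

/-- The vertical displacement of a Motzkin step. -/
def MStep.val : MStep → ℤ
  | .up => 1
  | .down => -1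
  | .flat => 0

/-- The height of the path after its first `k` steps. -/
def mHeight (l : List MStep) (k : ℕ) : ℤ := ((l.take k).map MStep.val).sum

/-- A list of steps is a Motzkin path if it never goes below the x-axis and ends at height 0. -/
def IsMotzkin (l : List MStep) : Prop :=
  (∀ k : ℕ, 0 ≤ mHeight l k) ∧ mHeight l l.length = 0

/-- The weight of a Motzkin path w.r.t. `(b, lam)`: a factor `b i` for every horizontal step
of height `i` and a factor `lam i` for every down step of height `i` (the height of a step
being the `y`-coordinate of its ending point). -/
def mWeight (b lam : ℕ → ℚ) (l : List MStep) : ℚ :=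
  ∏ i ∈ Finset.range l.length,
    match l.getD i MStep.up with
    | .up => 1
    | .flat => b (mHeight l (i + 1)).toNat
    | .down => lam (mHeight l (i + 1)).toNat

open Classical in
/-- `Mot_n(b,lam)`: the sum of the weights of all Motzkin paths of length `n`. -/
noncomputable def motSum (n : ℕ) (b lam : ℕ → ℚ) : ℚ :=
  ∑ f : Fin n → MStep,
    if IsMotzkin (List.ofFn f) then mWeight b lam (List.ofFn f) else 0

/-- A step of a Schröder path: up `(1,1)`, down `(1,-1)`, or double horizontal `(2,0)`. -/
inductive SStep : Type
  | up : SStep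
  | down : SStep
  | hh : SStep
  deriving DecidableEq

/-- The vertical displacement of a Schröder step. -/
def SStep.val : SStep → ℤ
  | .up => 1
  | .down => -1
  | .hh => 0

/-- The horizontal displacement (width) of a Schröder step. -/
def SStep.width : SStep → ℕ
  | .up => 1
  | .down => 1
  | .hh => 2

/-- The height of the path after its first `k` steps. -/
def sHeight (l : List SStep) (k : ℕ) : ℤ := ((l.take k).map SStep.val).sum

/-- A list of steps is a Schröder path of length `2n` if its total width is `2n`,
it never goes below the x-axis, and it ends at height 0. -/
def IsSchroeder (n : ℕ) (l : List SStep) : Prop :=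
  (l.map SStep.width).sum = 2 * n ∧ (∀ k : ℕ, 0 ≤ sHeight l k) ∧ sHeight l l.length = 0

/-- All double horizontal steps of the path have even height. -/
def AllHHEven (l : List SStep) : Prop :=
  ∀ i : ℕ, l.getD i SStep.up = SStep.hh → Even (sHeight l (i + 1))

/-- The path has no peak (an up step immediately followed by a down step) at even height,
the height of a peak being the height reached by its up step. -/
def NoEvenPeak (l : List SStep) : Prop :=
  ∀ i : ℕ, l.getD i SStep.down = SStep.up → l.getD (i + 1) SStep.up = SStep.down →
    ¬ Even (sHeight l (i + 1))

-- ================= auxiliary development =================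

inductive CStep : Type
  | up | down | fHH | fUD | fDU
  deriving DecidableEq

instance : Fintype CStep :=
  ⟨{CStep.up, CStep.down, CStep.fHH, CStep.fUD, CStep.fDU}, fun x => by cases x <;> simp⟩

def CStep.proj : CStep → MStep
  | .up => .up
  | .down => .down
  | _ => .flat

def CStep.cval (c : CStep) : ℤ := c.proj.val

def cH (m : List CStep) (k : ℕ) : ℤ := ((m.take k).map CStep.cval).sum

def CStep.blk : CStep → List SStep
  | .up => [.up, .up]
  | .down => [.down, .down]
  | .fHH => [.hh]
  | .fUD => [.up, .down]
  | .fDU => [.down, .up]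

def encL (m : List CStep) : List SStep := m.flatMap CStep.blk

lemma encL_nil : encL [] = [] := rfl
lemma encL_cons (c : CStep) (m : List CStep) : encL (c :: m) = c.blk ++ encL m := rfl

lemma width_encL (m : List CStep) : ((encL m).map SStep.width).sum = 2 * m.length := by
  induction m with
  | nil => rfl
  | cons c m ih =>
    cases c <;> simp [encL_cons, CStep.blk, SStep.width, ih] <;> omega

lemma vsum_encL (m : List CStep) : ((encL m).map SStep.val).sum = 2 * (m.map CStep.cval).sum := by
  induction m with
  | nil => rfl
  | cons c m ih =>
    cases c <;> simp [encL_cons, CStep.blk, SStep.val, CStep.cval, CStep.proj, MStep.val, ih] <;> ring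

lemma sHeight_zero (l : List SStep) : sHeight l 0 = 0 := rfl

lemma cH_succ_cons (c : CStep) (m : List CStep) (j : ℕ) :
    cH (c :: m) (j + 1) = c.cval + cH m j := by
  simp [cH]

lemma sHeight_succ_cons (s : SStep) (l : List SStep) (k : ℕ) :
    sHeight (s :: l) (k + 1) = s.val + sHeight l k := by
  simp [sHeight]

lemma fwd : ∀ (m : List CStep) (h : ℤ),
    (∀ j, 0 ≤ h + cH m j) →
    (∀ i, m.getD i .up = .fDU → 0 < h + cH m (i+1)) →
    (∀ k, 0 ≤ 2*h + sHeight (encL m) k) ∧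
    (∀ i, (encL m).getD i .up = .hh → Even (2*h + sHeight (encL m) (i+1))) := by
  intro m
  induction m with
  | nil =>
    intro h h1 _
    constructor
    · intro k
      have := h1 0
      simp [cH] at this
      simp [encL_nil, sHeight]
      omega
    · intro i hi
      simp [encL_nil] at hi
  | cons c m ih =>
    intro h h1 h2
    have hh0 : 0 ≤ h := by have := h1 0; simpa [cH] using this
    have ihm := ih (h + c.cval)
      (fun j => by have := h1 (j+1); rwa [cH_succ_cons, ← add_assoc] at this)
      (fun i hi => by
        have := h2 (i+1) (by simpa using hi)
        rwa [cH_succ_cons, ← add_assoc] at this)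
    cases c with
    | fHH =>
      have hcv : CStep.cval .fHH = 0 := rfl
      rw [hcv, add_zero] at ihm
      constructor
      · intro k
        match k with
        | 0 => simp [sHeight]; omega
        | (k+1) =>
          rw [encL_cons]
          show 0 ≤ 2*h + sHeight (.hh :: encL m) (k+1)
          rw [sHeight_succ_cons]
          have := ihm.1 k
          simp [SStep.val]
          omega
      · intro i hi
        rw [encL_cons] at hi ⊢
        match i with
        | 0 =>
          show Even (2*h + sHeight (.hh :: encL m) 1)
          rw [sHeight_succ_cons]
          simp [SStep.val, sHeight]
        | (i+1) =>
          show Even (2*h + sHeight (.hh :: encL m) (i+1+1))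
          rw [sHeight_succ_cons]
          have : (CStep.blk .fHH ++ encL m).getD (i+1) .up = (encL m).getD i .up := by
            simp [CStep.blk]
          rw [this] at hi
          have := ihm.2 i hi
          simpa [SStep.val] using this
    | up =>
      have hcv : CStep.cval .up = 1 := rfl
      rw [hcv] at ihm
      refine ⟨?_, ?_⟩
      · intro k
        match k with
        | 0 => simp [sHeight]; omega
        | 1 =>
          rw [encL_cons]
          show 0 ≤ 2*h + sHeight (.up :: .up :: encL m) 1
          rw [sHeight_succ_cons]
          simp [SStep.val, sHeight]
          omega
        | (k+2) =>
          rw [encL_cons]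
          show 0 ≤ 2*h + sHeight (.up :: .up :: encL m) (k+2)
          rw [show k+2 = (k+1)+1 by ring, sHeight_succ_cons, sHeight_succ_cons]
          have := ihm.1 k
          simp [SStep.val]
          omega
      · intro i hi
        rw [encL_cons] at hi ⊢
        match i with
        | 0 => simp [CStep.blk] at hi
        | 1 => simp [CStep.blk] at hi
        | (i+2) =>
          have hg : (CStep.blk .up ++ encL m).getD (i+2) .up = (encL m).getD i .up := by
            simp [CStep.blk]
          rw [hg] at hi
          have := ihm.2 i hi
          show Even (2*h + sHeight (.up :: .up :: encL m) (i+2+1))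
          rw [show i+2+1 = (i+1+1)+1 by ring, sHeight_succ_cons, sHeight_succ_cons]
          have e : 2*h + (SStep.up.val + (SStep.up.val + sHeight (encL m) (i+1)))
              = 2*(h+1) + sHeight (encL m) (i+1) := by simp [SStep.val]; ring
          rw [e]
          exact this
    | down =>
      have hcv : CStep.cval .down = -1 := rfl
      rw [hcv] at ihm
      have hh1 : 1 ≤ h := by have := h1 1; simp [cH, CStep.cval, CStep.proj, MStep.val] at this; omega
      refine ⟨?_, ?_⟩
      · intro k
        match k with
        | 0 => simp [sHeight]; omega
        | 1 =>
          rw [encL_cons]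
          show 0 ≤ 2*h + sHeight (.down :: .down :: encL m) 1
          rw [sHeight_succ_cons]
          simp [SStep.val, sHeight]
          omega
        | (k+2) =>
          rw [encL_cons]
          show 0 ≤ 2*h + sHeight (.down :: .down :: encL m) (k+2)
          rw [show k+2 = (k+1)+1 by ring, sHeight_succ_cons, sHeight_succ_cons]
          have := ihm.1 k
          simp [SStep.val]
          omega
      · intro i hi
        rw [encL_cons] at hi ⊢
        match i with
        | 0 => simp [CStep.blk] at hi
        | 1 => simp [CStep.blk] at hi
        | (i+2) =>
          have hg : (CStep.blk .down ++ encL m).getD (i+2) .up = (encL m).getD i .up := by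
            simp [CStep.blk]
          rw [hg] at hi
          have := ihm.2 i hi
          show Even (2*h + sHeight (.down :: .down :: encL m) (i+2+1))
          rw [show i+2+1 = (i+1+1)+1 by ring, sHeight_succ_cons, sHeight_succ_cons]
          have e : 2*h + (SStep.down.val + (SStep.down.val + sHeight (encL m) (i+1)))
              = 2*(h+(-1)) + sHeight (encL m) (i+1) := by simp [SStep.val]; ring
          rw [e]
          exact this
    | fUD =>
      have hcv : CStep.cval .fUD = 0 := rfl
      rw [hcv, add_zero] at ihm
      refine ⟨?_, ?_⟩
      · intro k
        match k with
        | 0 => simp [sHeight]; omega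
        | 1 =>
          rw [encL_cons]
          show 0 ≤ 2*h + sHeight (.up :: .down :: encL m) 1
          rw [sHeight_succ_cons]
          simp [SStep.val, sHeight]
          omega
        | (k+2) =>
          rw [encL_cons]
          show 0 ≤ 2*h + sHeight (.up :: .down :: encL m) (k+2)
          rw [show k+2 = (k+1)+1 by ring, sHeight_succ_cons, sHeight_succ_cons]
          have := ihm.1 k
          simp [SStep.val]
          omega
      · intro i hi
        rw [encL_cons] at hi ⊢
        match i with
        | 0 => simp [CStep.blk] at hi
        | 1 => simp [CStep.blk] at hi
        | (i+2) =>
          have hg : (CStep.blk .fUD ++ encL m).getD (i+2) .up = (encL m).getD i .up := by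
            simp [CStep.blk]
          rw [hg] at hi
          have := ihm.2 i hi
          show Even (2*h + sHeight (.up :: .down :: encL m) (i+2+1))
          rw [show i+2+1 = (i+1+1)+1 by ring, sHeight_succ_cons, sHeight_succ_cons]
          have e : 2*h + (SStep.up.val + (SStep.down.val + sHeight (encL m) (i+1)))
              = 2*h + sHeight (encL m) (i+1) := by simp [SStep.val]
          rw [e]
          exact this
    | fDU =>
      have hcv : CStep.cval .fDU = 0 := rfl
      rw [hcv, add_zero] at ihm
      have hh1 : 1 ≤ h := by
        have := h2 0 rfl
        simp [cH, CStep.cval, CStep.proj, MStep.val] at this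
        omega
      refine ⟨?_, ?_⟩
      · intro k
        match k with
        | 0 => simp [sHeight]; omega
        | 1 =>
          rw [encL_cons]
          show 0 ≤ 2*h + sHeight (.down :: .up :: encL m) 1
          rw [sHeight_succ_cons]
          simp [SStep.val, sHeight]
          omega
        | (k+2) =>
          rw [encL_cons]
          show 0 ≤ 2*h + sHeight (.down :: .up :: encL m) (k+2)
          rw [show k+2 = (k+1)+1 by ring, sHeight_succ_cons, sHeight_succ_cons]
          have := ihm.1 k
          simp [SStep.val]
          omega
      · intro i hi
        rw [encL_cons] at hi ⊢
        match i with
        | 0 => simp [CStep.blk] at hi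
        | 1 => simp [CStep.blk] at hi
        | (i+2) =>
          have hg : (CStep.blk .fDU ++ encL m).getD (i+2) .up = (encL m).getD i .up := by
            simp [CStep.blk]
          rw [hg] at hi
          have := ihm.2 i hi
          show Even (2*h + sHeight (.down :: .up :: encL m) (i+2+1))
          rw [show i+2+1 = (i+1+1)+1 by ring, sHeight_succ_cons, sHeight_succ_cons]
          have e : 2*h + (SStep.down.val + (SStep.up.val + sHeight (encL m) (i+1)))
              = 2*h + sHeight (encL m) (i+1) := by simp [SStep.val]
          rw [e]
          exact this

lemma bwd : ∀ (m : List CStep) (h : ℤ),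
    (∀ k, 0 ≤ 2*h + sHeight (encL m) k) →
    (∀ j, 0 ≤ h + cH m j) ∧ (∀ i, m.getD i .up = .fDU → 0 < h + cH m (i+1)) := by
  intro m
  induction m with
  | nil =>
    intro h h1
    have := h1 0
    simp [encL_nil, sHeight] at this
    constructor
    · intro j; simp [cH]; omega
    · intro i hi; simp at hi
  | cons c m ih =>
    intro h h1
    have hh0 : 0 ≤ h := by have := h1 0; simp [sHeight] at this; omega
    have key : ∀ k, 0 ≤ 2*(h + c.cval) + sHeight (encL m) k := by
      intro k
      cases c
      · have := h1 (k+2)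
        rw [encL_cons, show k+2=(k+1)+1 by ring] at this
        simp [CStep.blk, sHeight_succ_cons, SStep.val] at this
        show 0 ≤ 2*(h+1) + _
        omega
      · have := h1 (k+2)
        rw [encL_cons, show k+2=(k+1)+1 by ring] at this
        simp [CStep.blk, sHeight_succ_cons, SStep.val] at this
        show 0 ≤ 2*(h+(-1)) + _
        omega
      · have := h1 (k+1)
        rw [encL_cons] at this
        simp [CStep.blk, sHeight_succ_cons, SStep.val] at this
        show 0 ≤ 2*(h+0) + _
        omega
      · have := h1 (k+2)
        rw [encL_cons, show k+2=(k+1)+1 by ring] at this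
        simp [CStep.blk, sHeight_succ_cons, SStep.val] at this
        show 0 ≤ 2*(h+0) + _
        omega
      · have := h1 (k+2)
        rw [encL_cons, show k+2=(k+1)+1 by ring] at this
        simp [CStep.blk, sHeight_succ_cons, SStep.val] at this
        show 0 ≤ 2*(h+0) + _
        omega
    have ihm := ih (h + c.cval) key
    constructor
    · intro j
      match j with
      | 0 => simp [cH]; omega
      | (j+1) =>
        rw [cH_succ_cons]
        have := ihm.1 j
        omega
    · intro i hi
      match i with
      | 0 =>
        have hc : c = .fDU := by simpa using hi
        subst hc
        have := h1 1
        rw [encL_cons] at this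
        simp [CStep.blk, sHeight_succ_cons, SStep.val, sHeight] at this
        rw [cH_succ_cons]
        simp [cH, CStep.cval, CStep.proj, MStep.val]
        omega
      | (i+1) =>
        rw [List.getD_cons_succ] at hi
        have := ihm.2 i hi
        rw [cH_succ_cons]
        omega

def nhh (s : SStep) : Bool := !(s == SStep.hh)

lemma parity_vsum (l : List SStep) :
    Even (((l.map SStep.val).sum) + (l.countP nhh : ℤ)) := by
  induction l with
  | nil => simp
  | cons s l ih =>
    obtain ⟨t, ht⟩ := ih
    cases s <;> simp [List.countP_cons, nhh, SStep.val] <;>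
      first
        | exact ⟨t+1, by push_cast at ht ⊢; omega⟩
        | exact ⟨t, by push_cast at ht ⊢; omega⟩

lemma parity_width (l : List SStep) :
    Even (((l.map SStep.width).sum) + l.countP nhh) := by
  induction l with
  | nil => simp
  | cons s l ih =>
    obtain ⟨t, ht⟩ := ih
    cases s <;> simp [List.countP_cons, nhh, SStep.width] <;>
      first
        | exact ⟨t+1, by omega⟩
        | exact ⟨t, by omega⟩

def pairC : SStep → SStep → CStep
  | .up, .up => .up
  | .up, .down => .fUD
  | .down, .up => .fDU
  | .down, .down => .down
  | _, _ => .fHH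

lemma decode : ∀ (N : ℕ) (l : List SStep), l.length ≤ N →
    (∀ i, l.getD i .up = .hh → Even ((l.take i).countP nhh)) →
    Even (l.countP nhh) → ∃ m, encL m = l := by
  intro N
  induction N with
  | zero =>
    intro l hl _ _
    have : l = [] := List.length_eq_zero_iff.mp (Nat.le_zero.mp hl)
    exact ⟨[], by simp [this, encL_nil]⟩
  | succ N ih =>
    intro l hl hbal heven
    rcases l with _ | ⟨a, r0⟩
    · exact ⟨[], rfl⟩
    by_cases hA : a = SStep.hh
    · subst hA
      obtain ⟨m, hm⟩ := ih r0 (by simp at hl; omega)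
        (fun i hi => by
          have := hbal (i+1) (by simpa using hi)
          simpa [List.countP_cons, nhh] using this)
        (by simpa [List.countP_cons, nhh] using heven)
      exact ⟨.fHH :: m, by simp [encL_cons, CStep.blk, hm]⟩
    · have hna : nhh a = true := by cases a <;> simp [nhh] <;> exact hA rfl
      rcases r0 with _ | ⟨b, r⟩
      · exfalso
        simp [List.countP_cons, hna] at heven
      by_cases hB : b = SStep.hh
      · exfalso
        subst hB
        have := hbal 1 (by simp)
        simp [List.countP_cons, hna] at this
      · have hnb : nhh b = true := by cases b <;> simp [nhh] <;> exact hB rfl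
        obtain ⟨m, hm⟩ := ih r (by simp at hl; omega)
          (fun i hi => by
            have := hbal (i+2) (by simpa using hi)
            have e : List.take (i+2) (a :: b :: r) = a :: b :: List.take i r := by simp
            rw [e] at this
            simp [List.countP_cons, hna, hnb] at this
            obtain ⟨t, ht⟩ := this
            exact ⟨t-1, by omega⟩)
          (by
            simp [List.countP_cons, hna, hnb] at heven
            obtain ⟨t, ht⟩ := heven
            exact ⟨t-1, by omega⟩)
        refine ⟨pairC a b :: m, ?_⟩
        rw [encL_cons, hm]
        have : (pairC a b).blk = [a, b] := by
          cases a <;> cases b <;> simp_all [pairC, CStep.blk]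
        rw [this]
        rfl

lemma encL_inj : ∀ (m1 m2 : List CStep), encL m1 = encL m2 → m1 = m2 := by
  intro m1
  induction m1 with
  | nil =>
    intro m2 h
    cases m2 with
    | nil => rfl
    | cons c m2 => cases c <;> simp [encL_nil, encL_cons, CStep.blk] at h
  | cons c m1 ih =>
    intro m2 h
    cases m2 with
    | nil => cases c <;> simp [encL_nil, encL_cons, CStep.blk] at h
    | cons c' m2 =>
      cases c <;> cases c' <;> simp [encL_cons, CStep.blk] at h <;>
        simp_all <;> exact ih m2 rfl

def DUcond (m : List CStep) : Prop := ∀ i, m.getD i .up = .fDU → 0 < cH m (i+1)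

def GoodC (m : List CStep) : Prop :=
  (∀ k, 0 ≤ cH m k) ∧ cH m m.length = 0 ∧ DUcond m

lemma cH_length (m : List CStep) : cH m m.length = (m.map CStep.cval).sum := by
  simp [cH]

lemma sHeight_length (l : List SStep) : sHeight l l.length = (l.map SStep.val).sum := by
  simp [sHeight]

lemma enc_mem (n : ℕ) (m : List CStep) (hlen : m.length = n) (hg : GoodC m) :
    IsSchroeder n (encL m) ∧ AllHHEven (encL m) := by
  obtain ⟨h1, h2, h3⟩ := hg
  have F := fwd m 0 (fun j => by simpa using h1 j) (fun i hi => by simpa using h3 i hi)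
  refine ⟨⟨?_, fun k => by simpa using F.1 k, ?_⟩, fun i hi => by simpa using F.2 i hi⟩
  · rw [width_encL, hlen]
  · rw [sHeight_length, vsum_encL, ← cH_length, h2, mul_zero]

lemma enc_mem_rev (n : ℕ) (m : List CStep)
    (h : IsSchroeder n (encL m) ∧ AllHHEven (encL m)) : m.length = n ∧ GoodC m := by
  obtain ⟨⟨hw, hpos, hend⟩, _⟩ := h
  have B := bwd m 0 (fun k => by simpa using hpos k)
  refine ⟨?_, fun k => by simpa using B.1 k, ?_, fun i hi => by simpa using B.2 i hi⟩
  · rw [width_encL] at hw; omega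
  · rw [sHeight_length, vsum_encL] at hend
    rw [cH_length]; omega

lemma exists_decode (n : ℕ) (l : List SStep) (hs : IsSchroeder n l) (hE : AllHHEven l) :
    ∃ m, encL m = l := by
  apply decode l.length l le_rfl
  · intro i hi
    have hilt : i < l.length := by
      by_contra hge
      rw [List.getD_eq_default _ _ (le_of_not_gt hge)] at hi
      exact absurd hi (by simp)
    have heq : l.take (i+1) = l.take i ++ [SStep.hh] := by
      rw [List.take_succ]
      congr 1
      have : l[i]? = some (l[i]'hilt) := List.getElem?_eq_getElem hilt
      have hgi : l[i]'hilt = SStep.hh := by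
        rw [List.getD_eq_getElem?_getD, this] at hi
        simpa using hi
      simp [this, hgi]
    have hEi := hE i hi
    have hpar := parity_vsum (l.take (i+1))
    have hsh : sHeight l (i+1) = ((l.take (i+1)).map SStep.val).sum := rfl
    rw [← hsh, heq] at hpar
    simp [List.countP_append, nhh] at hpar
    have hc : Even (((l.take i).countP nhh : ℤ)) := by
      obtain ⟨t, ht⟩ := hEi
      obtain ⟨u, hu⟩ := hpar
      exact ⟨u - t, by push_cast at hu ⊢; omega⟩
    exact Int.even_coe_nat _ |>.mp hc
  · have hp := parity_width l
    rw [hs.1] at hp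
    obtain ⟨t, ht⟩ := hp
    exact ⟨t - n, by omega⟩

lemma card_eq_B (n : ℕ) :
    Nat.card {m : List CStep // m.length = n ∧ GoodC m} =
    Nat.card {l : List SStep // IsSchroeder n l ∧ AllHHEven l} := by
  apply Nat.card_eq_of_bijective
    (fun m => ⟨encL m.1, enc_mem n m.1 m.2.1 m.2.2⟩)
  constructor
  · intro a b hab
    exact Subtype.ext (encL_inj _ _ (congrArg Subtype.val hab))
  · rintro ⟨l, hl⟩
    obtain ⟨m, hm⟩ := exists_decode n l hl.1 hl.2
    have := enc_mem_rev n m (by rw [hm]; exact hl)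
    exact ⟨⟨m, this⟩, Subtype.ext hm⟩

lemma card_eq_fun (n : ℕ) :
    Nat.card {g : Fin n → CStep // GoodC (List.ofFn g)} =
    Nat.card {m : List CStep // m.length = n ∧ GoodC m} := by
  apply Nat.card_eq_of_bijective
    (fun g => ⟨List.ofFn g.1, by simp, g.2⟩)
  constructor
  · intro a b hab
    exact Subtype.ext (List.ofFn_injective (congrArg Subtype.val hab))
  · rintro ⟨m, hlen, hg⟩
    refine ⟨⟨fun i => m.getD i .up, ?_⟩, ?_⟩
    · have : List.ofFn (fun i : Fin n => m.getD i .up) = m := by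
        apply List.ext_getElem (by simpa using hlen.symm)
        intro i h1 h2
        simp [List.getD_eq_getElem m _ h2, List.getElem?_eq_getElem h2]
      rwa [this]
    · apply Subtype.ext
      apply List.ext_getElem (by simpa using hlen.symm)
      intro i h1 h2
      simp at h2
      simp [List.getD_eq_getElem, List.getElem?_eq_getElem h2]

-- being careful: getD of ofFn
lemma getD_ofFn {α : Type*} {n : ℕ} (f : Fin n → α) (i : ℕ) (d : α) (h : i < n) :
    (List.ofFn f).getD i d = f ⟨i, h⟩ := by
  rw [List.getD_eq_getElem _ _ (by simpa using h)]
  simp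

lemma getD_ofFn_ge {α : Type*} {n : ℕ} (f : Fin n → α) (i : ℕ) (d : α) (h : n ≤ i) :
    (List.ofFn f).getD i d = d :=
  List.getD_eq_default _ _ (by simpa using h)

lemma heights_eq (m : List CStep) (k : ℕ) : mHeight (m.map CStep.proj) k = cH m k := by
  simp only [mHeight, cH, ← List.map_take, List.map_map]
  rfl

lemma card_flat_true : Fintype.card {c : CStep // c.proj = .flat} = 3 := by decide

lemma card_flat_two : Fintype.card {c : CStep // c.proj = .flat ∧ c ≠ .fDU} = 2 := by decide

lemma card_up : Fintype.card {c : CStep // c.proj = .up} = 1 := by decide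

lemma card_down : Fintype.card {c : CStep // c.proj = .down} = 1 := by decide

open Classical in
lemma card_factor (s : MStep) (P : Prop)
    [inst : Fintype {c : CStep // c.proj = s ∧ (c = .fDU → P)}] :
    Fintype.card {c : CStep // c.proj = s ∧ (c = .fDU → P)} =
      (match s with
      | .up => 1
      | .down => 1
      | .flat => if P then 3 else 2) := by
  cases s
  · rw [← card_up]
    apply Fintype.card_congr
    apply Equiv.subtypeEquivRight
    intro c
    cases c <;> simp [CStep.proj]
  · rw [← card_down]
    apply Fintype.card_congr
    apply Equiv.subtypeEquivRight
    intro c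
    cases c <;> simp [CStep.proj]
  · by_cases hP : P
    · simp only [hP, if_true]
      rw [← card_flat_true]
      apply Fintype.card_congr
      apply Equiv.subtypeEquivRight
      intro c
      simp [hP]
    · simp only [hP, if_false]
      rw [← card_flat_two]
      exact Fintype.card_congr (Equiv.subtypeEquivRight (fun c => Iff.rfl))

lemma hof_eq {n : ℕ} {g : Fin n → CStep} {f : Fin n → MStep} (h : CStep.proj ∘ g = f) :
    List.ofFn f = (List.ofFn g).map CStep.proj := by
  rw [List.map_ofFn, h]

open Classical in
lemma per_f_neg (n : ℕ) (f : Fin n → MStep) (hM : ¬ IsMotzkin (List.ofFn f)) :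
    Fintype.card {g : Fin n → CStep // GoodC (List.ofFn g) ∧ CStep.proj ∘ g = f} = 0 := by
  classical
  rw [Fintype.card_eq_zero_iff]
  refine ⟨fun ⟨g, hg, hpg⟩ => hM ?_⟩
  rw [hof_eq hpg]
  obtain ⟨h1, h2, _⟩ := hg
  refine ⟨fun k => by rw [heights_eq]; exact h1 k, ?_⟩
  rw [List.length_map, heights_eq]
  exact h2

open Classical in
lemma per_f_pos (n : ℕ) (f : Fin n → MStep) (hM : IsMotzkin (List.ofFn f)) :
    mWeight (fun m => if m = 0 then 2 else 3) (fun _ => 1) (List.ofFn f) =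
    (Fintype.card {g : Fin n → CStep // GoodC (List.ofFn g) ∧ CStep.proj ∘ g = f} : ℚ) := by
  classical
  -- rewrite the predicate coordinatewise
  have hiff : ∀ g : Fin n → CStep,
      (GoodC (List.ofFn g) ∧ CStep.proj ∘ g = f) ↔
      (∀ i : Fin n, (g i).proj = f i ∧
        (g i = .fDU → 0 < mHeight (List.ofFn f) (i + 1))) := by
    intro g
    constructor
    · rintro ⟨hg, hpg⟩ i
      refine ⟨congrFun hpg i, fun hd => ?_⟩
      rw [hof_eq hpg, heights_eq]
      exact hg.2.2 i (by rw [getD_ofFn g i _ i.isLt]; exact hd)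
    · intro hco
      have hpg : CStep.proj ∘ g = f := funext fun i => (hco i).1
      have hof := hof_eq hpg
      refine ⟨⟨fun k => ?_, ?_, fun i hd => ?_⟩, hpg⟩
      · rw [← heights_eq, ← hof]; exact hM.1 k
      · rw [← heights_eq, ← hof]
        have := hM.2
        rwa [List.length_ofFn] at this ⊢
      · by_cases hin : i < n
        · rw [getD_ofFn g i _ hin] at hd
          have := (hco ⟨i, hin⟩).2 hd
          rwa [hof, heights_eq] at this
        · rw [getD_ofFn_ge g i _ (le_of_not_gt hin)] at hd
          exact absurd hd (by simp)
  have hcard : Fintype.card {g : Fin n → CStep // GoodC (List.ofFn g) ∧ CStep.proj ∘ g = f}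
      = ∏ i : Fin n, Fintype.card
          {c : CStep // c.proj = f i ∧ (c = .fDU → 0 < mHeight (List.ofFn f) (i + 1))} := by
    rw [← Fintype.card_pi]
    apply Fintype.card_congr
    exact (Equiv.subtypeEquivRight hiff).trans
      (Equiv.subtypePiEquivPi (p := fun (i : Fin n) (c : CStep) =>
        c.proj = f i ∧ (c = CStep.fDU → 0 < mHeight (List.ofFn f) (↑i + 1))))
  rw [hcard]
  -- weight side
  have hw : mWeight (fun m => if m = 0 then 2 else 3) (fun _ => 1) (List.ofFn f)
      = ∏ i : Fin n, (match f i with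
          | .up => (1 : ℚ)
          | .flat => if (mHeight (List.ofFn f) (↑i + 1)).toNat = 0 then 2 else 3
          | .down => 1) := by
    rw [mWeight, List.length_ofFn, ← Fin.prod_univ_eq_prod_range]
    apply Finset.prod_congr rfl
    intro i _
    rw [getD_ofFn f i _ i.isLt]
  rw [hw]
  push_cast
  apply Finset.prod_congr rfl
  intro i _
  rw [card_factor]
  have hnn : 0 ≤ mHeight (List.ofFn f) (↑i + 1) := hM.1 _
  cases hfi : f i
  · simp
  · simp
  · by_cases h0 : 0 < mHeight (List.ofFn f) (↑i + 1)
    · have : ¬ (mHeight (List.ofFn f) (↑i + 1)).toNat = 0 := by omega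
      simp [this, h0]
    · have : (mHeight (List.ofFn f) (↑i + 1)).toNat = 0 := by omega
      simp [this, h0]

open Classical in
lemma card_Sfun (n : ℕ) :
    motSum n (fun m => if m = 0 then 2 else 3) (fun _ => 1)
      = (Fintype.card {g : Fin n → CStep // GoodC (List.ofFn g)} : ℚ) := by
  classical
  have hc : Fintype.card {g : Fin n → CStep // GoodC (List.ofFn g)}
      = ∑ f : Fin n → MStep,
          Fintype.card {g : Fin n → CStep // GoodC (List.ofFn g) ∧ CStep.proj ∘ g = f} := by
    rw [← Fintype.card_sigma]
    apply Fintype.card_congr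
    refine ((Equiv.sigmaFiberEquiv
      (fun g : {g : Fin n → CStep // GoodC (List.ofFn g)} => CStep.proj ∘ g.1)).symm).trans ?_
    apply Equiv.sigmaCongrRight
    intro f
    exact Equiv.subtypeSubtypeEquivSubtypeInter
      (fun g : Fin n → CStep => GoodC (List.ofFn g)) (fun g => CStep.proj ∘ g = f)
  rw [motSum, hc]
  push_cast
  apply Finset.sum_congr rfl
  intro f _
  by_cases hM : IsMotzkin (List.ofFn f)
  · rw [if_pos hM, per_f_pos n f hM]
  · rw [if_neg hM, per_f_neg n f hM]
    simp

/-- With `α = (2,3,3,…)` and `β = (1,1,…)`, `Mot_n(α, β) = #SCH_even(n)` for `n ≥ 1`. -/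
theorem motzkin_two_three_eq_schroeder_even (n : ℕ) (hn : 1 ≤ n) :
    motSum n (fun m => if m = 0 then 2 else 3) (fun _ => 1) =
      (Nat.card {l : List SStep // IsSchroeder n l ∧ AllHHEven l} : ℚ) := by
  classical
  have h2 : (Fintype.card {g : Fin n → CStep // GoodC (List.ofFn g)} : ℕ)
      = Nat.card {l : List SStep // IsSchroeder n l ∧ AllHHEven l} := by
    rw [← Nat.card_eq_fintype_card, card_eq_fun, card_eq_B]
  rw [card_Sfun n, h2]
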